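/- arXiv:2510.24639 — 2 statements merged into one kernel-verified Lean document; each statement's English description precedes it below -/
import Mathlib

section
/- Let V be a finite type and r : V → V → Prop an acyclic relation (a DAG). If x ≠ y and x precedes y in every topological ordering of (V, r), then there is a directed path from x to y, i.e. Relation.TransGen r x y. -/
/-- If `V` is finite, `r` is acyclic, `x ≠ y` and `x` precedes `y` in every
topological ordering of `(V, r)`, then there is a directed path from `x` to `y`. -/
theorem stmt_2 {V : Type*} [Fintype V] (r : V → V → Prop)
    (hacyc : ∀ x, ¬ Relation.TransGen r x x) (x y : V) (hxy : x ≠ y)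
    (hprec : ∀ L : V → V → Prop, IsStrictTotalOrder V L →
      (∀ a b, r a b → L a b) → L x y) :
    Relation.TransGen r x y := by
  by_contra hnp
  -- strict order s : path, or (reaches y) and (reached from x)
  set T := Relation.TransGen r with hT
  set s : V → V → Prop := fun a b => T a b ∨ ((a = y ∨ T a y) ∧ (b = x ∨ T x b)) with hs
  have hTtrans : ∀ {a b c}, T a b → T b c → T a c := fun h1 h2 => h1.trans h2
  have hxylink : ∀ {b}, (b = x ∨ T x b) → (b = y ∨ T b y) → False := by
    rintro b (rfl | h1) (rfl | h2)
    · exact hxy rfl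
    · exact hnp h2
    · exact hnp h1
    · exact hnp (h1.trans h2)
  have hsirr : ∀ a, ¬ s a a := by
    rintro a (h | ⟨h1, h2⟩)
    · exact hacyc a h
    · exact hxylink h2 h1
  have hstrans : ∀ a b c, s a b → s b c → s a c := by
    rintro a b c (h | ⟨h1, h2⟩) (h' | ⟨h1', h2'⟩)
    · exact Or.inl (h.trans h')
    · refine Or.inr ⟨?_, h2'⟩
      rcases h1' with rfl | hby
      · exact Or.inr h
      · exact Or.inr (h.trans hby)
    · refine Or.inr ⟨h1, ?_⟩
      rcases h2 with rfl | hxb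
      · exact Or.inr h'
      · exact Or.inr (hxb.trans h')
    · exact (hxylink h2 h1').elim
  -- build partial order a ≤ b := a = b ∨ s a b
  let le : V → V → Prop := fun a b => a = b ∨ s a b
  have : IsPartialOrder V le := by
    refine { refl := ?_, trans := ?_, antisymm := ?_ }
    · intro a; exact Or.inl rfl
    · rintro a b c (rfl | h) (rfl | h')
      · exact Or.inl rfl
      · exact Or.inr h'
      · exact Or.inr h
      · exact Or.inr (hstrans _ _ _ h h')
    · rintro a b (rfl | h) (h' | h'')
      · rfl
      · rfl
      · exact h'.symm
      · exact absurd (hstrans _ _ _ h h'') (hsirr a)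
  obtain ⟨le', hlin, hext⟩ := extend_partialOrder le
  -- strict version
  let L : V → V → Prop := fun a b => le' a b ∧ a ≠ b
  have hLsto : IsStrictTotalOrder V L := by
    refine { trichotomous := ?_, irrefl := ?_, trans := ?_ }
    · intro a b
      rcases eq_or_ne a b with rfl | hne
      · exact fun _ _ => rfl
      · intro hab hba
        rcases hlin.total a b with h | h
        · exact (hab ⟨h, hne⟩).elim
        · exact (hba ⟨h, hne.symm⟩).elim
    · intro a h; exact h.2 rfl
    · rintro a b c ⟨h1, hne1⟩ ⟨h2, hne2⟩
      refine ⟨hlin.trans _ _ _ h1 h2, ?_⟩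
      rintro rfl
      exact hne1 (hlin.antisymm _ _ h1 h2)
  have hLext : ∀ a b, r a b → L a b := by
    intro a b hab
    have hsab : s a b := Or.inl (Relation.TransGen.single hab)
    refine ⟨hext _ _ (Or.inr hsab), ?_⟩
    rintro rfl
    exact hsirr a hsab
  have hLxy := hprec L hLsto hLext
  -- but s y x holds, giving le' y x
  have hsyx : s y x := Or.inr ⟨Or.inl rfl, Or.inl rfl⟩
  have : le' y x := hext _ _ (Or.inr hsyx)
  exact hLxy.2 (hlin.antisymm _ _ hLxy.1 this)
end

section
/- Reconstruction of the transitive closure: Let V be a finite type and r : V → V → Prop an acyclic relation (a DAG). Define E(L) = {(x, y) : x precedes y in L} for a topological ordering L of (V, r). Then the intersection of E(L) over ALL topological orderings L of (V, r) equals the edge set of the transitive closure G⁺, i.e. for all x y : V, (x precedes y in every topological ordering of (V, r)) ↔ Relation.TransGen r x y. -/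
open Relation

/-- Any acyclic relation on a type extends to a strict total order. -/
lemma exists_strict_total_ext {V : Type*} (q : V → V → Prop)
    (hq : ∀ x, ¬ TransGen q x x) :
    ∃ L : V → V → Prop, IsStrictTotalOrder V L ∧ ∀ a b, q a b → L a b := by
  have hpo : IsPartialOrder V (ReflTransGen q) :=
    { refl := fun a => ReflTransGen.refl
      trans := fun a b c hab hbc => hab.trans hbc
      antisymm := by
        intro a b hab hba
        rcases reflTransGen_iff_eq_or_transGen.mp hab with h | h
        · exact h.symm
        rcases reflTransGen_iff_eq_or_transGen.mp hba with h' | h'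
        · exact h'
        · exact absurd (h.trans h') (hq a) }
  obtain ⟨t, ht, hle⟩ := extend_partialOrder (ReflTransGen q)
  refine ⟨fun a b => t a b ∧ a ≠ b, ?_, ?_⟩
  · have htri : ∀ a b : V, (t a b ∧ a ≠ b) ∨ a = b ∨ (t b a ∧ b ≠ a) := by
      intro a b
      by_cases hab : a = b
      · exact Or.inr (Or.inl hab)
      rcases ht.total a b with h | h
      · exact Or.inl ⟨h, hab⟩
      · exact Or.inr (Or.inr ⟨h, Ne.symm hab⟩)
    have htr : ∀ a b c : V, (t a b ∧ a ≠ b) → (t b c ∧ b ≠ c) → (t a c ∧ a ≠ c) := by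
      intro a b c ⟨hab, hne1⟩ ⟨hbc, hne2⟩
      refine ⟨ht.trans _ _ _ hab hbc, ?_⟩
      rintro rfl
      exact hne1 (ht.antisymm _ _ hab hbc)
    exact { trichotomous := fun a b h1 h2 => ((htri a b).resolve_left h1).resolve_right h2, irrefl := fun a h => h.2 rfl, trans := htr }
  · intro a b hab
    by_cases h : a = b
    · subst h; exact absurd (TransGen.single hab) (hq a)
    · exact ⟨hle _ _ (ReflTransGen.single hab), h⟩

/-- Reconstruction of the transitive closure: for a finite DAG `(V, r)`,
`x` precedes `y` in every topological ordering of `(V, r)` iff there is a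
directed path from `x` to `y` (i.e. `(x, y)` is an edge of the transitive
closure `G⁺`). Hence the intersection of the edge sets of all topological
orderings is exactly the edge set of `G⁺`. -/
theorem stmt_3 {V : Type*} [Fintype V] (r : V → V → Prop)
    (hacyc : ∀ x, ¬ Relation.TransGen r x x) :
    ∀ x y : V,
      (∀ L : V → V → Prop, IsStrictTotalOrder V L →
        (∀ a b, r a b → L a b) → L x y) ↔ Relation.TransGen r x y := by
  intro x y
  constructor
  · intro H
    by_contra hnt
    -- x ≠ y
    obtain ⟨L0, hL0, hext0⟩ := exists_strict_total_ext r hacyc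
    have hxy : x ≠ y := by
      rintro rfl
      exact hL0.irrefl x (H L0 hL0 hext0)
    -- add edge y → x
    set r' : V → V → Prop := fun a b => r a b ∨ (a = y ∧ b = x) with hr'
    have decomp : ∀ a b, TransGen r' a b →
        TransGen r a b ∨ (ReflTransGen r a y ∧ ReflTransGen r x b) := by
      intro a b h
      induction h with
      | single h =>
        rcases h with h | ⟨rfl, rfl⟩
        · exact Or.inl (TransGen.single h)
        · exact Or.inr ⟨ReflTransGen.refl, ReflTransGen.refl⟩
      | tail h hstep ih =>
        rcases hstep with h' | ⟨rfl, rfl⟩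
        · rcases ih with ih | ⟨h1, h2⟩
          · exact Or.inl (ih.tail h')
          · exact Or.inr ⟨h1, h2.tail h'⟩
        · rcases ih with ih | ⟨h1, h2⟩
          · exact Or.inr ⟨ih.to_reflTransGen, ReflTransGen.refl⟩
          · -- ReflTransGen r x y would follow from h2 : ReflTransGen r x y
            exact Or.inr ⟨h1, ReflTransGen.refl⟩
    have hacyc' : ∀ a, ¬ TransGen r' a a := by
      intro a ha
      rcases decomp a a ha with h | ⟨h1, h2⟩
      · exact hacyc a h
      · have : ReflTransGen r x y := h2.trans h1
        rcases reflTransGen_iff_eq_or_transGen.mp this with h | h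
        · exact hxy h.symm
        · exact hnt h
    obtain ⟨L, hL, hext⟩ := exists_strict_total_ext r' hacyc'
    have hLyx : L y x := hext y x (Or.inr ⟨rfl, rfl⟩)
    have hLxy : L x y := H L hL (fun a b hab => hext a b (Or.inl hab))
    exact hL.irrefl x (hL.trans _ _ _ hLxy hLyx)
  · intro h L hL hext
    induction h with
    | single h => exact hext _ _ h
    | tail h hstep ih => exact hL.trans _ _ _ ih (hext _ _ hstep)
end
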